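/- Let A be an n×n nonnegative irreducible real matrix and let C, D be real diagonal n×n matrices. Then there exists t ∈ (0,1) with log r(e^{(1−t)C + tD} A) = (1−t)·log r(e^{C} A) + t·log r(e^{D} A) if and only if there exist a real number α > 0 and a diagonal matrix E with strictly positive diagonal entries such that e^{D} A = α · E^{−1} e^{C} A E. -/

import Mathlib

open Matrix

/-- Spectral radius of a real square matrix: the maximum modulus of its complex
eigenvalues. -/
noncomputable def specRad {n : ℕ} (A : Matrix (Fin n) (Fin n) ℝ) : ℝ :=
  sSup {x : ℝ | ∃ μ ∈ spectrum ℂ (A.map Complex.ofReal), x = ‖μ‖}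

/-- A nonnegative matrix is irreducible if for every pair (i,j) some power has a
positive (i,j) entry. -/
def MatIrred {n : ℕ} (A : Matrix (Fin n) (Fin n) ℝ) : Prop :=
  ∀ i j : Fin n, ∃ m : ℕ, 0 < m ∧ 0 < (A ^ m) i j

/-- For a real diagonal matrix D = diag d, `expDiag d` is diag (exp d). -/
noncomputable def expDiag {n : ℕ} (d : Fin n → ℝ) : Matrix (Fin n) (Fin n) ℝ :=
  Matrix.diagonal fun i => Real.exp (d i)

/-- Property 1: equality in the log-convexity inequality forces C - D to be scalar. -/
def Property1 {n : ℕ} (A : Matrix (Fin n) (Fin n) ℝ) : Prop :=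
  ∀ C D : Fin n → ℝ, ∀ t ∈ Set.Ioo (0:ℝ) 1,
    Real.log (specRad (expDiag (fun i => (1 - t) * C i + t * D i) * A)) =
      (1 - t) * Real.log (specRad (expDiag C * A)) +
        t * Real.log (specRad (expDiag D * A)) →
    ∃ c : ℝ, ∀ i, C i - D i = c

open Matrix

section Aux
variable {n : ℕ}

lemma pow_entry_nonneg (M : Matrix (Fin n) (Fin n) ℝ) (hM : ∀ i j, 0 ≤ M i j) :
    ∀ (m : ℕ) (i j), 0 ≤ (M ^ m) i j := by
  intro m
  induction m with
  | zero => intro i j; simp [Matrix.one_apply]; split <;> norm_num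
  | succ k ih =>
    intro i j
    rw [pow_succ, Matrix.mul_apply]
    exact Finset.sum_nonneg fun l _ => mul_nonneg (ih i l) (hM l j)

lemma pow_entry_mono {A B : Matrix (Fin n) (Fin n) ℝ} (hA : ∀ i j, 0 ≤ A i j)
    (hle : ∀ i j, A i j ≤ B i j) : ∀ (m : ℕ) (i j), (A ^ m) i j ≤ (B ^ m) i j := by
  intro m
  induction m with
  | zero => intro i j; simp
  | succ k ih =>
    intro i j
    rw [pow_succ, pow_succ, Matrix.mul_apply, Matrix.mul_apply]
    refine Finset.sum_le_sum fun l _ => mul_le_mul (ih i l) (hle l j) (hA l j) ?_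
    exact le_trans (pow_entry_nonneg A hA k i l) (ih i l)

lemma matIrred_of_le {A M : Matrix (Fin n) (Fin n) ℝ} (hA : ∀ i j, 0 ≤ A i j)
    (hAirr : MatIrred A) {c : ℝ} (hc : 0 < c) (h : ∀ i j, c * A i j ≤ M i j) :
    MatIrred M := by
  intro i j
  obtain ⟨m, hm, hpos⟩ := hAirr i j
  have h1 : ∀ i j, 0 ≤ (c • A) i j := fun i j => by
    simpa using mul_nonneg hc.le (hA i j)
  have h2 := pow_entry_mono h1 (fun i j => by simpa using h i j) m i j
  have h3 : ((c • A) ^ m) i j = c ^ m * (A ^ m) i j := by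
    rw [smul_pow]; simp
  rw [h3] at h2
  exact ⟨m, hm, lt_of_lt_of_le (mul_pos (pow_pos hc m) hpos) h2⟩

lemma expDiag_mul_nonneg {A : Matrix (Fin n) (Fin n) ℝ} (hA : ∀ i j, 0 ≤ A i j)
    (g : Fin n → ℝ) : ∀ i j, 0 ≤ (expDiag g * A) i j := by
  intro i j
  rw [expDiag, Matrix.diagonal_mul]
  exact mul_nonneg (Real.exp_pos _).le (hA i j)

lemma expDiag_mul_irred {A : Matrix (Fin n) (Fin n) ℝ} (hA : ∀ i j, 0 ≤ A i j)
    (hAirr : MatIrred A) (g : Fin n → ℝ) : MatIrred (expDiag g * A) := by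
  intro i j
  have hne : (Finset.univ : Finset (Fin n)).Nonempty := ⟨i, Finset.mem_univ i⟩
  set c : ℝ := Real.exp (Finset.univ.inf' hne g) with hc
  have hcpos : 0 < c := Real.exp_pos _
  have key : ∀ i' j', c * A i' j' ≤ (expDiag g * A) i' j' := by
    intro i' j'
    rw [expDiag, Matrix.diagonal_mul]
    exact mul_le_mul_of_nonneg_right
      (Real.exp_le_exp.2 (Finset.inf'_le g (Finset.mem_univ i'))) (hA i' j')
  exact matIrred_of_le hA hAirr hcpos key i j

lemma transpose_irred {M : Matrix (Fin n) (Fin n) ℝ} (h : MatIrred M) : MatIrred Mᵀ := by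
  intro i j
  obtain ⟨m, hm, hpos⟩ := h j i
  refine ⟨m, hm, ?_⟩
  rw [← Matrix.transpose_pow, Matrix.transpose_apply]
  exact hpos

lemma exists_pos_entry (hn : 0 < n) {M : Matrix (Fin n) (Fin n) ℝ}
    (hM : ∀ i j, 0 ≤ M i j) (hirr : MatIrred M) : ∃ i j, 0 < M i j := by
  by_contra h
  push_neg at h
  have hM0 : M = 0 := by
    ext i j; exact le_antisymm (h i j) (hM i j)
  obtain ⟨m, hm, hpos⟩ := hirr ⟨0, hn⟩ ⟨0, hn⟩
  rw [hM0, zero_pow hm.ne'] at hpos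
  simp at hpos

end Aux


section Perron
variable {n : ℕ}

lemma continuousOn_finset_inf' {ι X : Type*} [TopologicalSpace X] {s : Finset ι}
    (hs : s.Nonempty) {t : Set X} {f : ι → X → ℝ} (hf : ∀ i, ContinuousOn (f i) t) :
    ContinuousOn (fun x => s.inf' hs fun i => f i x) t := by
  induction hs using Finset.Nonempty.cons_induction with
  | singleton a => simpa using hf a
  | cons a s ha hs ih =>
    have heq : (fun x => (Finset.cons a s ha).inf' (Finset.cons_nonempty ha) fun i => f i x)
        = fun x => (f a x) ⊓ (s.inf' hs fun i => f i x) := by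
      funext x; rw [Finset.inf'_cons hs]
    rw [heq]
    exact (hf a).inf ih

lemma continuous_mulVec_entry (M : Matrix (Fin n) (Fin n) ℝ) (i : Fin n) :
    Continuous fun x : Fin n → ℝ => (M *ᵥ x) i := by
  simp only [Matrix.mulVec, dotProduct]
  exact continuous_finset_sum _ fun j _ => (continuous_const.mul (continuous_apply j))

lemma mulVec_pos_of_pos {N : Matrix (Fin n) (Fin n) ℝ} (hN : ∀ i j, 0 < N i j)
    {x : Fin n → ℝ} (hx : ∀ j, 0 ≤ x j) (hxne : ∃ j, 0 < x j) :
    ∀ i, 0 < (N *ᵥ x) i := by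
  intro i
  obtain ⟨j₀, hj₀⟩ := hxne
  refine Finset.sum_pos' (fun j _ => mul_nonneg (hN i j).le (hx j)) ⟨j₀, Finset.mem_univ j₀, ?_⟩
  exact mul_pos (hN i j₀) hj₀

lemma mulVec_nonneg {N : Matrix (Fin n) (Fin n) ℝ} (hN : ∀ i j, 0 ≤ N i j)
    {x : Fin n → ℝ} (hx : ∀ j, 0 ≤ x j) : ∀ i, 0 ≤ (N *ᵥ x) i := by
  intro i
  simp only [Matrix.mulVec, dotProduct]
  exact Finset.sum_nonneg fun j _ => mul_nonneg (hN i j) (hx j)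

lemma one_add_entry_nonneg {M : Matrix (Fin n) (Fin n) ℝ} (hM : ∀ i j, 0 ≤ M i j) :
    ∀ i j, 0 ≤ (1 + M) i j := by
  intro i j
  rw [Matrix.add_apply, Matrix.one_apply]
  split <;> [linarith [hM i j]; simpa using hM i j]

lemma one_add_pow_mono_exp {M : Matrix (Fin n) (Fin n) ℝ} (hM : ∀ i j, 0 ≤ M i j)
    {k K : ℕ} (hkK : k ≤ K) : ∀ i j, ((1 + M) ^ k) i j ≤ ((1 + M) ^ K) i j := by
  induction K, hkK using Nat.le_induction with
  | base => intro i j; exact le_refl _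
  | succ K hkK ih =>
    intro i j
    refine le_trans (ih i j) ?_
    have : (1 + M) ^ (K + 1) = (1 + M) ^ K + (1 + M) ^ K * M := by
      rw [pow_succ, mul_add, mul_one]
    rw [this, Matrix.add_apply]
    have h1 : 0 ≤ ((1 + M) ^ K * M) i j := by
      rw [Matrix.mul_apply]
      exact Finset.sum_nonneg fun l _ =>
        mul_nonneg (pow_entry_nonneg _ (one_add_entry_nonneg hM) K i l) (hM l j)
    linarith

/-- Existence of an all-positive power of (1 + M). -/
lemma exists_pos_powerComb {M : Matrix (Fin n) (Fin n) ℝ} (hM : ∀ i j, 0 ≤ M i j)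
    (hirr : MatIrred M) : ∃ K : ℕ, (∀ i j, 0 < ((1 + M) ^ K) i j) ∧
      Commute M ((1 + M) ^ K) := by
  classical
  choose m hm1 hm2 using fun p : Fin n × Fin n => hirr p.1 p.2
  set K := Finset.univ.sup m with hK
  refine ⟨K, fun i j => ?_, (((Commute.one_right M).add_right (Commute.refl M))).pow_right K⟩
  have h1 : (M ^ (m (i, j))) i j ≤ ((1 + M) ^ (m (i, j))) i j :=
    pow_entry_mono hM (fun i' j' => by
      rw [Matrix.add_apply, Matrix.one_apply]
      split <;> [linarith [hM i' j']; simp]) (m (i, j)) i j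
  have h2 := one_add_pow_mono_exp hM (Finset.le_sup (f := m) (Finset.mem_univ (i, j))) i j
  exact lt_of_lt_of_le (hm2 (i, j)) (le_trans h1 h2)


variable {n : ℕ}

lemma comm_shift {M N : Matrix (Fin n) (Fin n) ℝ} (hcomm : Commute M N)
    (v : Fin n → ℝ) (ρ : ℝ) :
    N *ᵥ (M *ᵥ v - ρ • v) = M *ᵥ (N *ᵥ v) - ρ • (N *ᵥ v) := by
  rw [Matrix.mulVec_sub, Matrix.mulVec_smul, Matrix.mulVec_mulVec,
    Matrix.mulVec_mulVec, ← hcomm.eq]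

theorem perron_exists (hn : 0 < n) {M : Matrix (Fin n) (Fin n) ℝ}
    (hM : ∀ i j, 0 ≤ M i j) (hirr : MatIrred M) :
    ∃ ρ : ℝ, 0 < ρ ∧ ∃ u : Fin n → ℝ, (∀ i, 0 < u i) ∧ M *ᵥ u = ρ • u := by
  classical
  obtain ⟨K, hNpos, hcomm⟩ := exists_pos_powerComb hM hirr
  set N := (1 + M) ^ K with hN
  have hFin : Nonempty (Fin n) := ⟨⟨0, hn⟩⟩
  set S := stdSimplex ℝ (Fin n) with hS
  have hposS : ∀ x ∈ S, ∀ i, 0 < (N *ᵥ x) i := by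
    intro x hx i
    obtain ⟨hx0, hx1⟩ := hx
    refine mulVec_pos_of_pos hNpos hx0 ?_ i
    by_contra h
    push_neg at h
    have hz : ∀ j, x j = 0 := fun j => le_antisymm (h j) (hx0 j)
    rw [Finset.sum_congr rfl (fun j _ => hz j), Finset.sum_const, smul_zero] at hx1
    norm_num at hx1
  have hne : (Finset.univ : Finset (Fin n)).Nonempty := ⟨hFin.some, Finset.mem_univ _⟩
  set f : (Fin n → ℝ) → ℝ := fun x => Finset.univ.inf' hne
      (fun i => (M *ᵥ (N *ᵥ x)) i / (N *ᵥ x) i) with hf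
  have hcont : ContinuousOn f S := by
    refine continuousOn_finset_inf' hne fun i => ContinuousOn.div ?_ ?_ ?_
    · have heq : (fun x : Fin n → ℝ => (M *ᵥ (N *ᵥ x)) i) = fun x => ((M * N) *ᵥ x) i := by
        funext x; rw [Matrix.mulVec_mulVec]
      rw [heq]; exact (continuous_mulVec_entry (M * N) i).continuousOn
    · exact (continuous_mulVec_entry N i).continuousOn
    · exact fun x hx => (hposS x hx i).ne'
  have hSne : S.Nonempty := by
    refine ⟨fun j => if j = hFin.some then 1 else 0, fun j => ?_, ?_⟩
    · show (0:ℝ) ≤ if j = hFin.some then 1 else 0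
      split <;> norm_num
    · simp
  obtain ⟨x₀, hx₀S, hmax'⟩ := (isCompact_stdSimplex ℝ (Fin n)).exists_isMaxOn hSne hcont
  have hmax : ∀ x ∈ S, f x ≤ f x₀ := fun x hx => hmax' hx
  set u := N *ᵥ x₀ with hu_def
  set ρ := f x₀ with hρ_def
  have hu : ∀ i, 0 < u i := hposS x₀ hx₀S
  have hρle : ∀ i, ρ * u i ≤ (M *ᵥ u) i := by
    intro i
    have h1 : ρ ≤ (M *ᵥ u) i / u i := Finset.inf'_le _ (Finset.mem_univ i)
    rwa [le_div_iff₀ (hu i)] at h1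
  have heig : M *ᵥ u = ρ • u := by
    by_contra hne'
    have hd : ∃ i, 0 < (M *ᵥ u) i - ρ * u i := by
      by_contra h
      push_neg at h
      apply hne'
      funext i
      have := hρle i
      have h2 := h i
      simp only [Pi.smul_apply, smul_eq_mul]
      linarith
    obtain ⟨i₁, hi₁⟩ := hd
    set w := N *ᵥ u with hw_def
    have hw : ∀ i, 0 < w i :=
      mulVec_pos_of_pos hNpos (fun j => (hu j).le) ⟨i₁, hu i₁⟩
    -- N *ᵥ (M *ᵥ u - ρ • u) = M *ᵥ w - ρ • w, and is positive
    have hkey : ∀ i, 0 < (M *ᵥ w) i - ρ * w i := by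
      intro i
      have hveq : M *ᵥ w - ρ • w = N *ᵥ (M *ᵥ u - ρ • u) :=
        (comm_shift hcomm u ρ).symm
      have hpos2 : ∀ i, 0 < (N *ᵥ (M *ᵥ u - ρ • u)) i := by
        refine mulVec_pos_of_pos hNpos (fun j => ?_) ⟨i₁, ?_⟩
        · have := hρle j; simp only [Pi.sub_apply, Pi.smul_apply, smul_eq_mul]; linarith
        · simpa only [Pi.sub_apply, Pi.smul_apply, smul_eq_mul] using hi₁
      have := hpos2 i
      rw [← hveq] at this
      simpa only [Pi.sub_apply, Pi.smul_apply, smul_eq_mul] using this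
    -- renormalize w
    set c := (∑ j, w j)⁻¹ with hc_def
    have hsum : 0 < ∑ j, w j := Finset.sum_pos (fun j _ => hw j) hne
    have hc : 0 < c := inv_pos.2 hsum
    set x₁ := c • w with hx₁_def
    have hx₁S : x₁ ∈ S := by
      constructor
      · intro j; exact mul_nonneg hc.le (hw j).le
      · simp only [hx₁_def, Pi.smul_apply, smul_eq_mul, ← Finset.mul_sum]
        exact inv_mul_cancel₀ hsum.ne'
    have hflt : ρ < f x₁ := by
      rw [hf, Finset.lt_inf'_iff]
      intro i _
      have hNx₁ : N *ᵥ x₁ = c • (N *ᵥ w) := by rw [hx₁_def, Matrix.mulVec_smul]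
      have hMNx₁ : M *ᵥ (N *ᵥ x₁) = c • (M *ᵥ (N *ᵥ w)) := by
        rw [hNx₁, Matrix.mulVec_smul]
      have hNw : ∀ i, 0 < (N *ᵥ w) i :=
        mulVec_pos_of_pos hNpos (fun j => (hw j).le) ⟨i₁, hw i₁⟩
      have hratio : (M *ᵥ (N *ᵥ x₁)) i / (N *ᵥ x₁) i
          = (M *ᵥ (N *ᵥ w)) i / (N *ᵥ w) i := by
        rw [hMNx₁, hNx₁]
        simp only [Pi.smul_apply, smul_eq_mul]
        rw [mul_div_mul_left _ _ hc.ne']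
      rw [hratio, lt_div_iff₀ (hNw i)]
      -- need: ρ * (N *ᵥ w) i < (M *ᵥ (N *ᵥ w)) i
      have hveq2 : M *ᵥ (N *ᵥ w) - ρ • (N *ᵥ w) = N *ᵥ (M *ᵥ w - ρ • w) :=
        (comm_shift hcomm w ρ).symm
      have hpos3 : 0 < (N *ᵥ (M *ᵥ w - ρ • w)) i := by
        refine mulVec_pos_of_pos hNpos (fun j => ?_) ⟨i₁, ?_⟩ i
        · have := hkey j; simp only [Pi.sub_apply, Pi.smul_apply, smul_eq_mul]; linarith
        · simpa only [Pi.sub_apply, Pi.smul_apply, smul_eq_mul] using hkey i₁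
      rw [← hveq2] at hpos3
      simp only [Pi.sub_apply, Pi.smul_apply, smul_eq_mul] at hpos3
      linarith
    exact absurd (hmax x₁ hx₁S) (not_le.2 hflt)
  -- positivity of ρ
  obtain ⟨i₀, j₀, hMpos⟩ := exists_pos_entry hn hM hirr
  have hMu : 0 < (M *ᵥ u) i₀ := by
    refine Finset.sum_pos' (fun j _ => mul_nonneg (hM i₀ j) (hu j).le)
      ⟨j₀, Finset.mem_univ j₀, mul_pos hMpos (hu j₀)⟩
  have hρpos : 0 < ρ := by
    have : (M *ᵥ u) i₀ = ρ * u i₀ := by rw [heig]; simp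
    rw [this] at hMu
    by_contra h
    push_neg at h
    nlinarith [hu i₀]
  exact ⟨ρ, hρpos, u, hu, heig⟩


variable {n : ℕ}

lemma dot_pos {v y : Fin n → ℝ} (hv : ∀ i, 0 < v i) (hy : ∀ i, 0 ≤ y i)
    (hyne : ∃ i, 0 < y i) : 0 < v ⬝ᵥ y := by
  obtain ⟨i₀, hi₀⟩ := hyne
  exact Finset.sum_pos' (fun i _ => mul_nonneg (hv i).le (hy i))
    ⟨i₀, Finset.mem_univ i₀, mul_pos (hv i₀) hi₀⟩

lemma left_right_eq (hn : 0 < n) {M : Matrix (Fin n) (Fin n) ℝ} {u v : Fin n → ℝ} {ρ ρ' : ℝ}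
    (hu : ∀ i, 0 < u i) (hv : ∀ i, 0 < v i)
    (hMu : M *ᵥ u = ρ • u) (hMv : Mᵀ *ᵥ v = ρ' • v) : ρ = ρ' := by
  have h1 : v ⬝ᵥ (M *ᵥ u) = ρ * (v ⬝ᵥ u) := by
    rw [hMu, dotProduct_smul, smul_eq_mul]
  have h2 : v ⬝ᵥ (M *ᵥ u) = ρ' * (v ⬝ᵥ u) := by
    rw [Matrix.dotProduct_mulVec, ← Matrix.mulVec_transpose, hMv,
      smul_dotProduct, smul_eq_mul]
  have h3 : 0 < v ⬝ᵥ u := dot_pos hv (fun i => (hu i).le) ⟨⟨0, hn⟩, hu _⟩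
  have := h1.symm.trans h2
  exact mul_right_cancel₀ h3.ne' this

lemma real_eig_mem {M : Matrix (Fin n) (Fin n) ℝ} {s : ℝ} {z : Fin n → ℝ}
    (hz : z ≠ 0) (heig : M *ᵥ z = s • z) :
    (s : ℂ) ∈ spectrum ℂ (M.map Complex.ofReal) := by
  rw [spectrum.mem_iff]
  intro hunit
  rw [Matrix.isUnit_iff_isUnit_det, isUnit_iff_ne_zero] at hunit
  apply hunit
  have hmap : (algebraMap ℂ (Matrix (Fin n) (Fin n) ℂ)) (s : ℂ) - M.map Complex.ofReal
      = (Complex.ofRealHom.mapMatrix) (s • (1 : Matrix (Fin n) (Fin n) ℝ) - M) := by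
    ext i j
    simp [Algebra.algebraMap_eq_smul_one, Matrix.sub_apply, Matrix.smul_apply,
      Matrix.one_apply, Matrix.map_apply, RingHom.mapMatrix_apply, smul_eq_mul]
    split <;> simp
  rw [hmap, ← RingHom.map_det]
  have hdet : (s • (1 : Matrix (Fin n) (Fin n) ℝ) - M).det = 0 := by
    rw [← Matrix.exists_mulVec_eq_zero_iff]
    refine ⟨z, hz, ?_⟩
    rw [Matrix.sub_mulVec, Matrix.smul_mulVec, Matrix.one_mulVec, heig, sub_self]
  rw [hdet]
  simp

lemma spec_abs_le {M : Matrix (Fin n) (Fin n) ℝ} (hM : ∀ i j, 0 ≤ M i j)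
    {v : Fin n → ℝ} {ρ' : ℝ} (hv : ∀ i, 0 < v i) (hMv : Mᵀ *ᵥ v = ρ' • v) :
    ∀ μ ∈ spectrum ℂ (M.map Complex.ofReal), ‖μ‖ ≤ ρ' := by
  intro μ hμ
  rw [spectrum.mem_iff] at hμ
  have hdet : ((algebraMap ℂ (Matrix (Fin n) (Fin n) ℂ)) μ - M.map Complex.ofReal).det = 0 := by
    by_contra h
    exact hμ ((Matrix.isUnit_iff_isUnit_det _).2 (isUnit_iff_ne_zero.2 h))
  obtain ⟨z, hz0, hz⟩ := (Matrix.exists_mulVec_eq_zero_iff).2 hdet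
  have heig : (M.map Complex.ofReal) *ᵥ z = μ • z := by
    have h1 : ((algebraMap ℂ (Matrix (Fin n) (Fin n) ℂ)) μ - M.map Complex.ofReal) *ᵥ z
        = μ • z - (M.map Complex.ofReal) *ᵥ z := by
      rw [Matrix.sub_mulVec, Algebra.algebraMap_eq_smul_one,
        Matrix.smul_mulVec, Matrix.one_mulVec]
    rw [hz] at h1
    exact (sub_eq_zero.mp h1.symm).symm
  set y : Fin n → ℝ := fun i => ‖z i‖ with hy_def
  have hy0 : ∀ i, 0 ≤ y i := fun i => norm_nonneg _
  have hyne : ∃ i, 0 < y i := by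
    have : ∃ i, z i ≠ 0 := by
      by_contra h
      push_neg at h
      exact hz0 (funext h)
    obtain ⟨i, hi⟩ := this
    exact ⟨i, norm_pos_iff.2 hi⟩
  have hrow : ∀ i, ‖μ‖ * y i ≤ (M *ᵥ y) i := by
    intro i
    have h2 : (M.map Complex.ofReal *ᵥ z) i = ∑ j, (M i j : ℂ) * z j := by
      simp [Matrix.mulVec, dotProduct, Matrix.map_apply]
    have h3 : ‖μ‖ * y i = ‖∑ j, (M i j : ℂ) * z j‖ := by
      rw [← h2, heig, hy_def]
      simp [norm_mul]
    rw [h3]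
    calc ‖∑ j, (M i j : ℂ) * z j‖ ≤ ∑ j, ‖(M i j : ℂ) * z j‖ :=
          norm_sum_le _ _
      _ = ∑ j, M i j * y j := by
          refine Finset.sum_congr rfl fun j _ => ?_
          rw [norm_mul, Complex.norm_real, Real.norm_of_nonneg (hM i j)]
      _ = (M *ᵥ y) i := by simp [Matrix.mulVec, dotProduct]
  have hdy : 0 < v ⬝ᵥ y := dot_pos hv hy0 hyne
  have h4 : ‖μ‖ * (v ⬝ᵥ y) ≤ ρ' * (v ⬝ᵥ y) := by
    have h5 : v ⬝ᵥ (M *ᵥ y) = ρ' * (v ⬝ᵥ y) := by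
      rw [Matrix.dotProduct_mulVec, ← Matrix.mulVec_transpose, hMv,
        smul_dotProduct, smul_eq_mul]
    calc ‖μ‖ * (v ⬝ᵥ y) = ∑ i, v i * (‖μ‖ * y i) := by
          rw [dotProduct, Finset.mul_sum]
          refine Finset.sum_congr rfl fun i _ => by ring
      _ ≤ ∑ i, v i * (M *ᵥ y) i :=
          Finset.sum_le_sum fun i _ => mul_le_mul_of_nonneg_left (hrow i) (hv i).le
      _ = v ⬝ᵥ (M *ᵥ y) := rfl
      _ = ρ' * (v ⬝ᵥ y) := h5
  exact le_of_mul_le_mul_right h4 hdy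

/-- Main characterization: a positive eigenvector's eigenvalue is the spectral radius. -/
lemma specRad_eq_of_pos_eig (hn : 0 < n) {M : Matrix (Fin n) (Fin n) ℝ}
    (hM : ∀ i j, 0 ≤ M i j) (hirr : MatIrred M) {s : ℝ} {z : Fin n → ℝ}
    (hz : ∀ i, 0 < z i) (heig : M *ᵥ z = s • z) : specRad M = s ∧ 0 < s := by
  have hMT : ∀ i j, 0 ≤ Mᵀ i j := fun i j => hM j i
  obtain ⟨ρ', hρ', v, hv, hMv⟩ := perron_exists hn hMT (transpose_irred hirr)
  have hsρ : s = ρ' := left_right_eq hn hz hv heig hMv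
  subst hsρ
  have hzne : z ≠ 0 := by
    intro h
    have := hz ⟨0, hn⟩
    rw [h] at this
    simp at this
  have hmem : ((s : ℝ) : ℂ) ∈ spectrum ℂ (M.map Complex.ofReal) := real_eig_mem hzne heig
  have habs : s = ‖((s : ℝ) : ℂ)‖ := by
    rw [Complex.norm_real, Real.norm_of_nonneg hρ'.le]
  have hsetmem : s ∈ {x : ℝ | ∃ μ ∈ spectrum ℂ (M.map Complex.ofReal), x = ‖μ‖} :=
    ⟨(s : ℂ), hmem, habs⟩
  have hbound : ∀ x ∈ {x : ℝ | ∃ μ ∈ spectrum ℂ (M.map Complex.ofReal), x = ‖μ‖},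
      x ≤ s := by
    rintro x ⟨μ, hμ, rfl⟩
    exact spec_abs_le hM hv hMv μ hμ
  refine ⟨le_antisymm (csSup_le ⟨s, hsetmem⟩ hbound) (le_csSup ⟨s, hbound⟩ hsetmem), hρ'⟩


variable {n : ℕ}

lemma amgm2 {t a b : ℝ} (ht : t ∈ Set.Ioo (0:ℝ) 1) (ha : 0 ≤ a) (hb : 0 ≤ b) :
    a ^ (1 - t) * b ^ t ≤ (1 - t) * a + t * b :=
  Real.geom_mean_le_arith_mean2_weighted (by linarith [ht.2]) ht.1.le ha hb (by ring)

lemma amgm2_eq {t a b : ℝ} (ht : t ∈ Set.Ioo (0:ℝ) 1) (ha : 0 ≤ a) (hb : 0 ≤ b)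
    (h : a ^ (1 - t) * b ^ t = (1 - t) * a + t * b) : a = b := by
  obtain ⟨ht0, ht1⟩ := ht
  rcases eq_or_lt_of_le ha with ha0 | hapos
  · rw [← ha0] at h ⊢
    rw [Real.zero_rpow (by intro hc; linarith : (1:ℝ) - t ≠ 0), zero_mul] at h
    have htb : t * b = 0 := by linarith
    rcases mul_eq_zero.mp htb with h' | h'
    · linarith
    · exact h'.symm
  rcases eq_or_lt_of_le hb with hb0 | hbpos
  · rw [← hb0] at h ⊢
    rw [Real.zero_rpow (ne_of_gt ht0), mul_zero] at h
    have hta : (1 - t) * a = 0 := by linarith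
    rcases mul_eq_zero.mp hta with h' | h'
    · linarith
    · exact h'
  by_contra hne
  have hstrict := strictConcaveOn_log_Ioi.2 (Set.mem_Ioi.2 hapos) (Set.mem_Ioi.2 hbpos) hne
      (by linarith : (0:ℝ) < 1 - t) ht0 (by ring)
  simp only [smul_eq_mul] at hstrict
  have hmix : 0 < (1 - t) * a + t * b :=
    add_pos (mul_pos (by linarith) hapos) (mul_pos ht0 hbpos)
  have hlhs : a ^ (1 - t) * b ^ t = Real.exp ((1 - t) * Real.log a + t * Real.log b) := by
    rw [Real.rpow_def_of_pos hapos, Real.rpow_def_of_pos hbpos, ← Real.exp_add]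
    ring_nf
  have h2 : Real.exp ((1 - t) * Real.log a + t * Real.log b)
      < Real.exp (Real.log ((1 - t) * a + t * b)) := Real.exp_lt_exp.2 hstrict
  rw [Real.exp_log hmix] at h2
  rw [hlhs] at h
  linarith

lemma holder_term_eq {t : ℝ} (ht : t ∈ Set.Ioo (0:ℝ) 1) {x A y B : ℝ}
    (hx : 0 ≤ x) (hA : 0 < A) (hy : 0 ≤ y) (hB : 0 < B) :
    x ^ (1 - t) * y ^ t = (x / A) ^ (1 - t) * (y / B) ^ t * (A ^ (1 - t) * B ^ t) := by
  rw [Real.div_rpow hx hA.le, Real.div_rpow hy hB.le]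
  have h1 : (0:ℝ) < A ^ (1 - t) := Real.rpow_pos_of_pos hA _
  have h2 : (0:ℝ) < B ^ t := Real.rpow_pos_of_pos hB _
  field_simp

lemma holder_le {t : ℝ} (ht : t ∈ Set.Ioo (0:ℝ) 1) (a b : Fin n → ℝ)
    (ha : ∀ j, 0 ≤ a j) (hb : ∀ j, 0 ≤ b j)
    (hA : 0 < ∑ j, a j) (hB : 0 < ∑ j, b j) :
    ∑ j, (a j) ^ (1 - t) * (b j) ^ t ≤ (∑ j, a j) ^ (1 - t) * (∑ j, b j) ^ t := by
  set A := ∑ j, a j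
  set B := ∑ j, b j
  set P := A ^ (1 - t) * B ^ t with hP_def
  have hPpos : 0 < P :=
    mul_pos (Real.rpow_pos_of_pos hA _) (Real.rpow_pos_of_pos hB _)
  have hterm : ∀ j, (a j) ^ (1 - t) * (b j) ^ t
      ≤ ((1 - t) * (a j / A) + t * (b j / B)) * P := by
    intro j
    rw [holder_term_eq ht (ha j) hA (hb j) hB]
    exact mul_le_mul_of_nonneg_right
      (amgm2 ht (div_nonneg (ha j) hA.le) (div_nonneg (hb j) hB.le)) hPpos.le
  calc ∑ j, (a j) ^ (1 - t) * (b j) ^ t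
      ≤ ∑ j, ((1 - t) * (a j / A) + t * (b j / B)) * P :=
        Finset.sum_le_sum fun j _ => hterm j
    _ = ((1 - t) * ((∑ j, a j) / A) + t * ((∑ j, b j) / B)) * P := by
        rw [← Finset.sum_mul]
        congr 1
        rw [Finset.sum_add_distrib, ← Finset.mul_sum, ← Finset.mul_sum,
          ← Finset.sum_div, ← Finset.sum_div]
    _ = P := by
        rw [div_self hA.ne', div_self hB.ne']
        ring

lemma holder_eq {t : ℝ} (ht : t ∈ Set.Ioo (0:ℝ) 1) (a b : Fin n → ℝ)
    (ha : ∀ j, 0 ≤ a j) (hb : ∀ j, 0 ≤ b j)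
    (hA : 0 < ∑ j, a j) (hB : 0 < ∑ j, b j)
    (heq : ∑ j, (a j) ^ (1 - t) * (b j) ^ t = (∑ j, a j) ^ (1 - t) * (∑ j, b j) ^ t) :
    ∀ j, a j * (∑ j, b j) = b j * (∑ j, a j) := by
  set A := ∑ j, a j
  set B := ∑ j, b j
  set P := A ^ (1 - t) * B ^ t with hP_def
  have hPpos : 0 < P :=
    mul_pos (Real.rpow_pos_of_pos hA _) (Real.rpow_pos_of_pos hB _)
  have hterm : ∀ j, (a j) ^ (1 - t) * (b j) ^ t
      ≤ ((1 - t) * (a j / A) + t * (b j / B)) * P := by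
    intro j
    rw [holder_term_eq ht (ha j) hA (hb j) hB]
    exact mul_le_mul_of_nonneg_right
      (amgm2 ht (div_nonneg (ha j) hA.le) (div_nonneg (hb j) hB.le)) hPpos.le
  have hsum2 : ∑ j, ((1 - t) * (a j / A) + t * (b j / B)) * P = P := by
    rw [← Finset.sum_mul]
    have : ∑ j, ((1 - t) * (a j / A) + t * (b j / B))
        = (1 - t) * (A / A) + t * (B / B) := by
      rw [Finset.sum_add_distrib, ← Finset.mul_sum, ← Finset.mul_sum,
        ← Finset.sum_div, ← Finset.sum_div]
    rw [this, div_self hA.ne', div_self hB.ne']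
    ring
  have hzero : ∑ j, (((1 - t) * (a j / A) + t * (b j / B)) * P
      - (a j) ^ (1 - t) * (b j) ^ t) = 0 := by
    rw [Finset.sum_sub_distrib, hsum2, heq, sub_self]
  have heach := (Finset.sum_eq_zero_iff_of_nonneg
    (fun j _ => sub_nonneg.2 (hterm j))).1 hzero
  intro j
  have hj := heach j (Finset.mem_univ j)
  have hj2 : (a j) ^ (1 - t) * (b j) ^ t = ((1 - t) * (a j / A) + t * (b j / B)) * P := by
    linarith [sub_eq_zero.mp hj]
  rw [holder_term_eq ht (ha j) hA (hb j) hB] at hj2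
  have hj3 : (a j / A) ^ (1 - t) * (b j / B) ^ t
      = (1 - t) * (a j / A) + t * (b j / B) :=
    mul_right_cancel₀ hPpos.ne' hj2
  have hj4 := amgm2_eq ht (div_nonneg (ha j) hA.le) (div_nonneg (hb j) hB.le) hj3
  field_simp at hj4
  linarith [hj4]


variable {n : ℕ}

lemma expDiag_mul_apply (g : Fin n → ℝ) (A : Matrix (Fin n) (Fin n) ℝ) (i j : Fin n) :
    (expDiag g * A) i j = Real.exp (g i) * A i j := by
  rw [expDiag, Matrix.diagonal_mul]

lemma row_sum_eq {M : Matrix (Fin n) (Fin n) ℝ} {u : Fin n → ℝ} {ρ : ℝ}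
    (h : M *ᵥ u = ρ • u) (i : Fin n) : ∑ j, M i j * u j = ρ * u i := by
  have := congrFun h i
  simpa [Matrix.mulVec, dotProduct, smul_eq_mul] using this

lemma diag_inv_eq {E : Fin n → ℝ} (hE : ∀ i, E i ≠ 0) :
    (Matrix.diagonal E)⁻¹ = Matrix.diagonal (fun i => (E i)⁻¹) := by
  apply Matrix.inv_eq_right_inv
  rw [Matrix.diagonal_mul_diagonal]
  rw [show (1 : Matrix (Fin n) (Fin n) ℝ) = Matrix.diagonal (fun _ => 1) from
    (Matrix.diagonal_one).symm]
  have heq : (fun i => E i * (E i)⁻¹) = fun _ => (1:ℝ) :=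
    funext fun i => mul_inv_cancel₀ (hE i)
  rw [heq]

lemma exp_interp {t ci di α ei ej a : ℝ} (ht : t ∈ Set.Ioo (0:ℝ) 1) (hα : 0 < α)
    (hei : 0 < ei) (hej : 0 < ej) (ha : 0 ≤ a)
    (h : Real.exp di * a = α * (ei⁻¹ * (Real.exp ci * a) * ej)) :
    Real.exp ((1 - t) * ci + t * di) * a
      = (α ^ t * (ei ^ t)⁻¹ * ej ^ t) * (Real.exp ci * a) := by
  rcases eq_or_lt_of_le ha with ha0 | hapos
  · rw [← ha0]; ring
  have hd : Real.exp di = α * ei⁻¹ * Real.exp ci * ej := by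
    have h2 : Real.exp di * a = (α * ei⁻¹ * Real.exp ci * ej) * a := by
      rw [h]; ring
    exact mul_right_cancel₀ hapos.ne' h2
  have hsplit : (1 - t) * ci + t * di = ci + (di - ci) * t := by ring
  rw [hsplit, Real.exp_add, Real.exp_mul]
  have hdc : Real.exp (di - ci) = α * ei⁻¹ * ej := by
    rw [Real.exp_sub, hd]
    field_simp [Real.exp_ne_zero]
  rw [hdc]
  have h3 : (α * ei⁻¹ * ej) ^ t = α ^ t * (ei ^ t)⁻¹ * ej ^ t := by
    rw [Real.mul_rpow (by positivity) hej.le, Real.mul_rpow hα.le (by positivity),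
      Real.inv_rpow hei.le]
  rw [h3]
  ring


variable {n : ℕ}

lemma backward_dir (hn : 0 < n) (A : Matrix (Fin n) (Fin n) ℝ)
    (hA : ∀ i j, 0 ≤ A i j) (hAirr : MatIrred A) (C D : Fin n → ℝ)
    {α : ℝ} (hα : 0 < α) {E : Fin n → ℝ} (hE : ∀ i, 0 < E i)
    (hmat : expDiag D * A = α • ((Matrix.diagonal E)⁻¹ * (expDiag C * A) * Matrix.diagonal E))
    {t : ℝ} (ht : t ∈ Set.Ioo (0:ℝ) 1) :
    Real.log (specRad (expDiag (fun i => (1 - t) * C i + t * D i) * A)) =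
      (1 - t) * Real.log (specRad (expDiag C * A)) +
        t * Real.log (specRad (expDiag D * A)) := by
  obtain ⟨ρP, hρP, uP, huP, hPu⟩ :=
    perron_exists hn (expDiag_mul_nonneg hA C) (expDiag_mul_irred hA hAirr C)
  have hQent : ∀ i j, Real.exp (D i) * A i j
      = α * ((E i)⁻¹ * (Real.exp (C i) * A i j) * E j) := by
    intro i j
    have h0 := congrFun (congrFun hmat i) j
    rw [diag_inv_eq (fun i => (hE i).ne')] at h0
    simp only [expDiag, Matrix.smul_apply, Matrix.mul_diagonal, Matrix.diagonal_mul,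
      smul_eq_mul] at h0
    linear_combination h0
  -- eigenvector of B_t
  set z : Fin n → ℝ := fun j => ((E j) ^ t)⁻¹ * uP j with hz_def
  have hz : ∀ j, 0 < z j := fun j =>
    mul_pos (inv_pos.2 (Real.rpow_pos_of_pos (hE j) t)) (huP j)
  have hBt_ent : ∀ i j, (expDiag (fun i => (1 - t) * C i + t * D i) * A) i j
      = (α ^ t * ((E i) ^ t)⁻¹ * (E j) ^ t) * ((expDiag C * A) i j) := by
    intro i j
    rw [expDiag_mul_apply, expDiag_mul_apply]
    exact exp_interp ht hα (hE i) (hE j) (hA i j) (hQent i j)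
  have hBtz : (expDiag (fun i => (1 - t) * C i + t * D i) * A) *ᵥ z = (α ^ t * ρP) • z := by
    funext i
    show ∑ j, (expDiag (fun i => (1 - t) * C i + t * D i) * A) i j * z j = _
    calc ∑ j, (expDiag (fun i => (1 - t) * C i + t * D i) * A) i j * z j
        = ∑ j, (α ^ t * ((E i) ^ t)⁻¹) * ((expDiag C * A) i j * uP j) := by
          refine Finset.sum_congr rfl fun j _ => ?_
          rw [hBt_ent i j, hz_def]
          have hne : E j ^ t ≠ 0 := (Real.rpow_pos_of_pos (hE j) t).ne'
          field_simp
      _ = (α ^ t * ((E i) ^ t)⁻¹) * (ρP * uP i) := by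
          rw [← Finset.mul_sum, row_sum_eq hPu i]
      _ = (α ^ t * ρP) • z i := by
          rw [hz_def, smul_eq_mul]
          ring
  -- eigenvector of Q
  set zQ : Fin n → ℝ := fun j => (E j)⁻¹ * uP j with hzQ_def
  have hzQ : ∀ j, 0 < zQ j := fun j => mul_pos (inv_pos.2 (hE j)) (huP j)
  have hQz : (expDiag D * A) *ᵥ zQ = (α * ρP) • zQ := by
    funext i
    show ∑ j, (expDiag D * A) i j * zQ j = _
    calc ∑ j, (expDiag D * A) i j * zQ j
        = ∑ j, (α * (E i)⁻¹) * ((expDiag C * A) i j * uP j) := by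
          refine Finset.sum_congr rfl fun j _ => ?_
          rw [expDiag_mul_apply, hQent i j, hzQ_def, expDiag_mul_apply]
          have hne : E j ≠ 0 := (hE j).ne'
          field_simp
      _ = (α * (E i)⁻¹) * (ρP * uP i) := by
          rw [← Finset.mul_sum, row_sum_eq hPu i]
      _ = (α * ρP) • zQ i := by
          rw [hzQ_def, smul_eq_mul]
          ring
  have hsBt := specRad_eq_of_pos_eig hn (expDiag_mul_nonneg hA _)
    (expDiag_mul_irred hA hAirr _) hz hBtz
  have hsQ := specRad_eq_of_pos_eig hn (expDiag_mul_nonneg hA _)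
    (expDiag_mul_irred hA hAirr _) hzQ hQz
  have hsP := specRad_eq_of_pos_eig hn (expDiag_mul_nonneg hA _)
    (expDiag_mul_irred hA hAirr _) huP hPu
  rw [hsBt.1, hsP.1, hsQ.1]
  rw [Real.log_mul (Real.rpow_pos_of_pos hα t).ne' hρP.ne',
    Real.log_mul hα.ne' hρP.ne', Real.log_rpow hα]
  ring


variable {n : ℕ}

lemma forward_dir (hn : 0 < n) (A : Matrix (Fin n) (Fin n) ℝ)
    (hA : ∀ i j, 0 ≤ A i j) (hAirr : MatIrred A) (C D : Fin n → ℝ) {t : ℝ}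
    (ht : t ∈ Set.Ioo (0:ℝ) 1)
    (heq : Real.log (specRad (expDiag (fun i => (1 - t) * C i + t * D i) * A)) =
      (1 - t) * Real.log (specRad (expDiag C * A)) +
        t * Real.log (specRad (expDiag D * A))) :
    ∃ α : ℝ, 0 < α ∧ ∃ E : Fin n → ℝ, (∀ i, 0 < E i) ∧
      expDiag D * A = α • ((Matrix.diagonal E)⁻¹ * (expDiag C * A) * Matrix.diagonal E) := by
  obtain ⟨ρP, hρP, uP, huP, hPu⟩ :=
    perron_exists hn (expDiag_mul_nonneg hA C) (expDiag_mul_irred hA hAirr C)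
  obtain ⟨ρQ, hρQ, uQ, huQ, hQu⟩ :=
    perron_exists hn (expDiag_mul_nonneg hA D) (expDiag_mul_irred hA hAirr D)
  obtain ⟨ρB, hρB, uB, huB, hBu⟩ :=
    perron_exists hn (expDiag_mul_nonneg hA (fun i => (1 - t) * C i + t * D i))
      (expDiag_mul_irred hA hAirr (fun i => (1 - t) * C i + t * D i))
  have hsP := (specRad_eq_of_pos_eig hn (expDiag_mul_nonneg hA C)
    (expDiag_mul_irred hA hAirr C) huP hPu).1
  have hsQ := (specRad_eq_of_pos_eig hn (expDiag_mul_nonneg hA D)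
    (expDiag_mul_irred hA hAirr D) huQ hQu).1
  have hsB := (specRad_eq_of_pos_eig hn (expDiag_mul_nonneg hA _)
    (expDiag_mul_irred hA hAirr _) huB hBu).1
  rw [hsB, hsP, hsQ] at heq
  have hρB_eq : ρB = ρP ^ (1 - t) * ρQ ^ t := by
    calc ρB = Real.exp (Real.log ρB) := (Real.exp_log hρB).symm
      _ = Real.exp ((1 - t) * Real.log ρP) * Real.exp (t * Real.log ρQ) := by
          rw [heq, Real.exp_add]
      _ = ρP ^ (1 - t) * ρQ ^ t := by
          rw [Real.rpow_def_of_pos hρP, Real.rpow_def_of_pos hρQ,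
            mul_comm (Real.log ρP), mul_comm (Real.log ρQ)]
  set s : ℝ := ρP ^ (1 - t) * ρQ ^ t with hs_def
  have hspos : 0 < s :=
    mul_pos (Real.rpow_pos_of_pos hρP _) (Real.rpow_pos_of_pos hρQ _)
  set z : Fin n → ℝ := fun j => uP j ^ (1 - t) * uQ j ^ t with hz_def
  have hz : ∀ j, 0 < z j := fun j =>
    mul_pos (Real.rpow_pos_of_pos (huP j) _) (Real.rpow_pos_of_pos (huQ j) _)
  have hrowid : ∀ i j, (expDiag (fun i => (1 - t) * C i + t * D i) * A) i j * z j
      = ((expDiag C * A) i j * uP j) ^ (1 - t) * ((expDiag D * A) i j * uQ j) ^ t := by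
    intro i j
    have e1 : ((expDiag C * A) i j * uP j) ^ (1 - t)
        = Real.exp ((1 - t) * C i) * (A i j) ^ (1 - t) * (uP j) ^ (1 - t) := by
      rw [expDiag_mul_apply,
        Real.mul_rpow (mul_nonneg (Real.exp_pos _).le (hA i j)) (huP j).le,
        Real.mul_rpow (Real.exp_pos _).le (hA i j), ← Real.exp_mul, mul_comm (C i)]
    have e2 : ((expDiag D * A) i j * uQ j) ^ t
        = Real.exp (t * D i) * (A i j) ^ t * (uQ j) ^ t := by
      rw [expDiag_mul_apply,
        Real.mul_rpow (mul_nonneg (Real.exp_pos _).le (hA i j)) (huQ j).le,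
        Real.mul_rpow (Real.exp_pos _).le (hA i j), ← Real.exp_mul, mul_comm (D i)]
    have e3 : (A i j) ^ (1 - t) * (A i j) ^ t = A i j := by
      rw [← Real.rpow_add' (hA i j) (by norm_num : (1 - t) + t ≠ 0)]
      norm_num
    rw [expDiag_mul_apply, e1, e2, Real.exp_add, hz_def]
    linear_combination (-(Real.exp ((1 - t) * C i) * Real.exp (t * D i) *
      uP j ^ (1 - t) * uQ j ^ t)) * e3
  have hrowP : ∀ i, 0 < ∑ j, (expDiag C * A) i j * uP j := by
    intro i
    rw [row_sum_eq hPu i]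
    exact mul_pos hρP (huP i)
  have hrowQ : ∀ i, 0 < ∑ j, (expDiag D * A) i j * uQ j := by
    intro i
    rw [row_sum_eq hQu i]
    exact mul_pos hρQ (huQ i)
  have hanonneg : ∀ i j, 0 ≤ (expDiag C * A) i j * uP j := fun i j =>
    mul_nonneg (expDiag_mul_nonneg hA C i j) (huP j).le
  have hbnonneg : ∀ i j, 0 ≤ (expDiag D * A) i j * uQ j := fun i j =>
    mul_nonneg (expDiag_mul_nonneg hA D i j) (huQ j).le
  have hsz : ∀ i, (∑ j, (expDiag C * A) i j * uP j) ^ (1 - t)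
      * (∑ j, (expDiag D * A) i j * uQ j) ^ t = s * z i := by
    intro i
    rw [row_sum_eq hPu i, row_sum_eq hQu i,
      Real.mul_rpow hρP.le (huP i).le, Real.mul_rpow hρQ.le (huQ i).le, hs_def, hz_def]
    ring
  have hBtz_le : ∀ i, ((expDiag (fun i => (1 - t) * C i + t * D i) * A) *ᵥ z) i ≤ s * z i := by
    intro i
    have hcalc : ((expDiag (fun i => (1 - t) * C i + t * D i) * A) *ᵥ z) i
        = ∑ j, ((expDiag C * A) i j * uP j) ^ (1 - t) * ((expDiag D * A) i j * uQ j) ^ t := by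
      simp only [Matrix.mulVec, dotProduct]
      exact Finset.sum_congr rfl (fun j _ => hrowid i j)
    rw [hcalc, ← hsz i]
    exact holder_le ht _ _ (hanonneg i) (hbnonneg i) (hrowP i) (hrowQ i)
  -- left Perron vector of B_t
  have hBT : ∀ i j, 0 ≤ ((expDiag (fun i => (1 - t) * C i + t * D i) * A)ᵀ) i j :=
    fun i j => expDiag_mul_nonneg hA (fun i => (1 - t) * C i + t * D i) j i
  obtain ⟨ρ', hρ'pos, v, hv, hvB⟩ := perron_exists hn hBT
    (transpose_irred (expDiag_mul_irred hA hAirr (fun i => (1 - t) * C i + t * D i)))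
  have hρ'B : ρB = ρ' := left_right_eq hn huB hv hBu hvB
  have hsum0 : ∑ i, v i * (s * z i - ((expDiag (fun i => (1 - t) * C i + t * D i) * A) *ᵥ z) i)
      = 0 := by
    have h1 : ∑ i, v i * ((expDiag (fun i => (1 - t) * C i + t * D i) * A) *ᵥ z) i
        = ρ' * (v ⬝ᵥ z) := by
      have : v ⬝ᵥ ((expDiag (fun i => (1 - t) * C i + t * D i) * A) *ᵥ z) = ρ' * (v ⬝ᵥ z) := by
        rw [Matrix.dotProduct_mulVec, ← Matrix.mulVec_transpose, hvB,
          smul_dotProduct, smul_eq_mul]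
      exact this
    have h2 : ∑ i, v i * (s * z i) = s * (v ⬝ᵥ z) := by
      rw [dotProduct, Finset.mul_sum]
      exact Finset.sum_congr rfl fun i _ => by ring
    have hsρ' : s = ρ' := (hρB_eq.symm.trans hρ'B)
    calc ∑ i, v i * (s * z i - ((expDiag (fun i => (1 - t) * C i + t * D i) * A) *ᵥ z) i)
        = (∑ i, v i * (s * z i))
          - ∑ i, v i * ((expDiag (fun i => (1 - t) * C i + t * D i) * A) *ᵥ z) i := by
          rw [← Finset.sum_sub_distrib]
          exact Finset.sum_congr rfl fun i _ => by ring
      _ = s * (v ⬝ᵥ z) - ρ' * (v ⬝ᵥ z) := by rw [h1, h2]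
      _ = 0 := by rw [hsρ']; ring
  have hcoord : ∀ i, ((expDiag (fun i => (1 - t) * C i + t * D i) * A) *ᵥ z) i = s * z i := by
    have heach := (Finset.sum_eq_zero_iff_of_nonneg (fun i _ =>
      mul_nonneg (hv i).le (sub_nonneg.2 (hBtz_le i)))).1 hsum0
    intro i
    have hi := heach i (Finset.mem_univ i)
    rcases mul_eq_zero.1 hi with h' | h'
    · exact absurd h' (hv i).ne'
    · linarith [sub_eq_zero.1 h']
  have hprop : ∀ i j, ((expDiag C * A) i j * uP j) * (ρQ * uQ i)
      = ((expDiag D * A) i j * uQ j) * (ρP * uP i) := by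
    intro i j
    have hroweq : ∑ j', ((expDiag C * A) i j' * uP j') ^ (1 - t)
        * ((expDiag D * A) i j' * uQ j') ^ t
        = (∑ j', (expDiag C * A) i j' * uP j') ^ (1 - t)
          * (∑ j', (expDiag D * A) i j' * uQ j') ^ t := by
      have hcalc : ((expDiag (fun i => (1 - t) * C i + t * D i) * A) *ᵥ z) i
          = ∑ j', ((expDiag C * A) i j' * uP j') ^ (1 - t)
            * ((expDiag D * A) i j' * uQ j') ^ t := by
        simp only [Matrix.mulVec, dotProduct]
        exact Finset.sum_congr rfl (fun j' _ => hrowid i j')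
      rw [← hcalc, hcoord i, ← hsz i]
    have happ := holder_eq ht (fun j' => (expDiag C * A) i j' * uP j')
      (fun j' => (expDiag D * A) i j' * uQ j') (hanonneg i) (hbnonneg i)
      (hrowP i) (hrowQ i) hroweq j
    rwa [row_sum_eq hPu i, row_sum_eq hQu i] at happ
  refine ⟨ρQ / ρP, div_pos hρQ hρP, fun i => uP i / uQ i,
    fun i => div_pos (huP i) (huQ i), ?_⟩
  rw [diag_inv_eq (fun i => (div_pos (huP i) (huQ i)).ne')]
  ext i j
  simp only [Matrix.smul_apply, Matrix.mul_diagonal, Matrix.diagonal_mul, smul_eq_mul]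
  have key := hprop i j
  rw [expDiag_mul_apply (g := D)] at key ⊢
  rw [expDiag_mul_apply (g := C)] at key ⊢
  have h1 : uP i ≠ 0 := (huP i).ne'
  have h2 : uQ i ≠ 0 := (huQ i).ne'
  have h3 : uQ j ≠ 0 := (huQ j).ne'
  have h4 : uP j ≠ 0 := (huP j).ne'
  field_simp
  linear_combination -key


theorem stmt4 {n : ℕ} (A : Matrix (Fin n) (Fin n) ℝ)
    (hA : ∀ i j, 0 ≤ A i j) (hAirr : MatIrred A)
    (C D : Fin n → ℝ) :
    (∃ t ∈ Set.Ioo (0:ℝ) 1,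
        Real.log (specRad (expDiag (fun i => (1 - t) * C i + t * D i) * A)) =
          (1 - t) * Real.log (specRad (expDiag C * A)) +
            t * Real.log (specRad (expDiag D * A))) ↔
      ∃ α : ℝ, 0 < α ∧ ∃ E : Fin n → ℝ, (∀ i, 0 < E i) ∧
        expDiag D * A = α • ((Matrix.diagonal E)⁻¹ * (expDiag C * A) * Matrix.diagonal E) := by
  rcases Nat.eq_zero_or_pos n with hn | hn
  · subst hn
    constructor
    · intro _
      refine ⟨1, one_pos, fun _ => 1, fun _ => one_pos, ?_⟩
      ext i j
      exact i.elim0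
    · intro _
      refine ⟨1/2, by norm_num [Set.mem_Ioo], ?_⟩
      have hEq1 : expDiag (fun i => (1 - (1:ℝ)/2) * C i + (1/2) * D i) * A
          = expDiag C * A := by
        ext i j; exact i.elim0
      have hEq2 : expDiag D * A = expDiag C * A := by
        ext i j; exact i.elim0
      rw [hEq1, hEq2]
      ring
  · constructor
    · rintro ⟨t, ht, heqt⟩
      exact forward_dir hn A hA hAirr C D ht heqt
    · rintro ⟨α, hα, E, hE, hmat⟩
      exact ⟨1/2, by norm_num [Set.mem_Ioo],
        backward_dir hn A hA hAirr C D hα hE hmat (by norm_num [Set.mem_Ioo])⟩
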